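/- Let G be a finite group, N a characteristic subgroup of G, α an automorphism of G, and α̃ the induced automorphism of G/N. Then L₂(α) ≤ [N : fix(α|_N)] · L₂(α̃), where L₂(β) denotes the number of elements x squared by β (i.e., with β(x) = x²) and fix(α|_N) is the group of fixed points of α restricted to N. -/

import Mathlib

/-- If `α̃` is the automorphism of `G ⧸ N` induced by `α` (N characteristic), then the
number of elements squared by `α` is at most `[N : fix(α|_N)]` times the number of
elements of `G ⧸ N` squared by `α̃`. -/
theorem stmt_4 {G : Type*} [Group G] [Finite G] (N : Subgroup G) [N.Characteristic]
    (α : G ≃* G) (αbar : (G ⧸ N) ≃* (G ⧸ N))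
    (hbar : ∀ g : G, αbar (g : G ⧸ N) = ((α g : G) : G ⧸ N)) :
    Nat.card {x : G | α x = x ^ 2} ≤
      ((α.toMonoidHom.eqLocus (MonoidHom.id G)).relIndex N) *
        Nat.card {y : G ⧸ N | αbar y = y ^ 2} := by
  classical
  set E := α.toMonoidHom.eqLocus (MonoidHom.id G) with hE
  have hEmem : ∀ g : G, g ∈ E ↔ α g = g := fun g => Iff.rfl
  -- core cancellation lemma
  have key : ∀ x x' : G, α x = x ^ 2 → α x' = x' ^ 2 → α (x * x'⁻¹) = x * x'⁻¹ →
      x = x' := by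
    intro x x' hx hx' hd
    rw [map_mul, map_inv, hx, hx'] at hd
    have h2 := congrArg (fun g => x⁻¹ * g * (x' * x')) hd
    simpa [pow_two, mul_assoc] using h2
  haveI : N.Normal := inferInstance
  -- membership of images in T
  have hT : ∀ x : G, α x = x ^ 2 → αbar (x : G ⧸ N) = (x : G ⧸ N) ^ 2 := by
    intro x hx
    rw [hbar, hx]
    rfl
  -- second component: `out [x] * x⁻¹ ∈ N`
  have hNmem : ∀ x : G, ((x : G ⧸ N) : G ⧸ N).out * x⁻¹ ∈ N := by
    intro x
    have hout : ((((x : G ⧸ N)).out : G) : G ⧸ N) = (x : G ⧸ N) := by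
      exact QuotientGroup.out_eq' _
    have hw : ((x : G ⧸ N)).out⁻¹ * x ∈ N := (QuotientGroup.eq).mp hout
    have := ‹N.Normal›.conj_mem _ (N.inv_mem hw) ((x : G ⧸ N)).out
    simpa [mul_assoc] using this
  -- the injection
  set S := {x : G | α x = x ^ 2}
  set T := {y : G ⧸ N | αbar y = y ^ 2}
  let f : S → T × (N ⧸ E.subgroupOf N) := fun x =>
    (⟨(x : G), hT x x.2⟩,
      QuotientGroup.mk ⟨((x : G) : G ⧸ N).out * (x : G)⁻¹, hNmem x⟩)
  have hfinj : Function.Injective f := by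
    rintro ⟨x, hx⟩ ⟨x', hx'⟩ hfx
    have h1 : (x : G ⧸ N) = (x' : G ⧸ N) := congrArg Subtype.val (congrArg Prod.fst hfx)
    have h2 := congrArg Prod.snd hfx
    simp only [f] at h2
    rw [QuotientGroup.eq] at h2
    have h3 : ((((x : G ⧸ N)).out * x⁻¹ : G))⁻¹ *
        ((((x' : G ⧸ N)).out * x'⁻¹ : G)) ∈ E := by
      have := h2
      rw [Subgroup.mem_subgroupOf] at this
      simpa [h1] using this
    have h4 : x * x'⁻¹ ∈ E := by
      have h5 : x * ((x : G ⧸ N)).out⁻¹ * (((x' : G ⧸ N)).out * x'⁻¹) ∈ E := by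
        simpa [mul_assoc] using h3
      rw [h1] at h5
      simpa [mul_assoc] using h5
    have hfix : α (x * x'⁻¹) = x * x'⁻¹ := (hEmem _).mp h4
    exact Subtype.ext (key x x' hx hx' hfix)
  have hcard : Nat.card S ≤ Nat.card (T × (N ⧸ E.subgroupOf N)) :=
    Nat.card_le_card_of_injective f hfinj
  rw [Nat.card_prod] at hcard
  have hrel : Nat.card (N ⧸ E.subgroupOf N) = E.relIndex N := rfl
  calc Nat.card S ≤ Nat.card T * Nat.card (N ⧸ E.subgroupOf N) := hcard
    _ = E.relIndex N * Nat.card T := by rw [hrel, mul_comm]
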